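/- arXiv:1609.05264 — 2 statements merged into one kernel-verified Lean document; each statement's English description precedes it below -/
import Mathlib

section
/- Let P_i^{ID}⊆Q be connected and disjoint from ⋃_{j≠i} P_j, and let k∈P_i^{ID}. If S1 and S2 are connected subsets of Q each satisfying conditions (1) and (2) of the additive-subset definition (with P_i^{add}(k) replaced by S1, respectively S2), then S1∪S2 is connected and also satisfies conditions (1) and (2). -/
open scoped Classical ENNReal

noncomputable section

universe u

/-- A weighted graph environment `G(Q) = (Q, E)` with undirected edges and
positive edge weights. -/
structure Env (V : Type u) where
  adj : V → V → Prop
  adj_symm : ∀ u v, adj u v → adj v u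
  adj_irrefl : ∀ v, ¬ adj v v
  w : V → V → ℝ
  w_pos : ∀ u v, adj u v → 0 < w u v
  w_symm : ∀ u v, w u v = w v u

variable {V : Type u}

/-- `PathIn G S p` : `p` is a (nonempty) walk of `G` all of whose vertices lie in `S`. -/
def PathIn (G : Env V) (S : Set V) : List V → Prop
  | [] => False
  | [v] => v ∈ S
  | u :: v :: rest => u ∈ S ∧ G.adj u v ∧ PathIn G S (v :: rest)

/-- Total weighted length of a walk. -/
def pathLen (G : Env V) : List V → ℝ≥0∞
  | [] => 0
  | [_] => 0
  | u :: v :: rest => ENNReal.ofReal (G.w u v) + pathLen G (v :: rest)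

/-- Weighted shortest-path distance between two vertices inside the subgraph of `G`
induced on `S` (`∞` if no connecting path inside `S` exists). -/
def dIn (G : Env V) (S : Set V) (a b : V) : ℝ≥0∞ :=
  sInf {L : ℝ≥0∞ | ∃ p : List V, PathIn G S p ∧ p.head? = some a ∧
    p.getLast? = some b ∧ pathLen G p = L}

/-- Length of a shortest path inside the subgraph induced on `S` from `a` to the set `B`. -/
def dInSet (G : Env V) (S : Set V) (a : V) (B : Set V) : ℝ≥0∞ :=
  ⨅ b ∈ B, dIn G S a b

/-- A subset `S` is connected if its induced subgraph is connected. -/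
def ConnIn (G : Env V) (S : Set V) : Prop :=
  ∀ a ∈ S, ∀ b ∈ S, ∃ p : List V, PathIn G S p ∧ p.head? = some a ∧ p.getLast? = some b

/-- A vertex `k` is adjacent to a set `S`. -/
def AdjTo (G : Env V) (k : V) (S : Set V) : Prop :=
  k ∉ S ∧ ∃ v ∈ S, G.adj k v

/-- An `m`-covering of the vertex set. -/
def IsCovering {m : ℕ} (P : Fin m → Set V) : Prop :=
  (∀ v : V, ∃ i, v ∈ P i) ∧ ∀ i, (P i).Nonempty

/-- An `m`-partition of the vertex set. -/
def IsPartition {m : ℕ} (P : Fin m → Set V) : Prop :=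
  IsCovering P ∧ ∀ i j : Fin m, i ≠ j → P i ∩ P j = ∅

/-- Conditions (1) and (2) of the additive-subset definition (together with
connectivity of the candidate set `S`). -/
def AddCond {m : ℕ} (G : Env V) (s : Fin m → ℝ) (P : Fin m → Set V) (c : Fin m → V)
    (T : Fin m → ℝ) (i : Fin m) (Pid : Set V) (k : V) (S : Set V) : Prop :=
  ConnIn G S ∧ Pid ⊆ S ∧
    ∀ j : Fin m, j ≠ i → ∀ h ∈ S ∩ P j,
      T j = 0 ∧
      ENNReal.ofReal (1 / s i) * dIn G S h k < ENNReal.ofReal (1 / s j) * dIn G (P j) h (c j)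

/-- `S` is *the* additive subset `P_i^add(k)` : the largest connected subset
satisfying conditions (1) and (2); it contains every subset satisfying them. -/
def IsAddSet {m : ℕ} (G : Env V) (s : Fin m → ℝ) (P : Fin m → Set V) (c : Fin m → V)
    (T : Fin m → ℝ) (i : Fin m) (Pid : Set V) (k : V) (S : Set V) : Prop :=
  AddCond G s P c T i Pid k S ∧ ∀ S' : Set V, AddCond G s P c T i Pid k S' → S' ⊆ S

/-- The coverage cost `H(c, P, t)`. -/
def Hcost {m : ℕ} [Fintype V] (G : Env V) (s : Fin m → ℝ) (Φ : V → ℝ → ℝ)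
    (c : Fin m → V) (P : Fin m → Set V) (t : ℝ) : ℝ≥0∞ :=
  ∑ k : V,
    sInf {x : ℝ≥0∞ | ∃ i : Fin m, k ∈ P i ∧ x = ENNReal.ofReal (1 / s i) * dIn G (P i) k (c i)} *
      ENNReal.ofReal (Φ k t)

/-- The complete state maintained by the base station together with all the
agents' local variables. -/
structure CovState (V : Type u) (m : ℕ) where
  P : Fin m → Set V
  c : Fin m → V
  ID : V → Fin m
  T : Fin m → ℝ
  ω : Fin m → ℝ
  PA : Fin m → Set V
  cA : Fin m → V
  Ppd : Fin m → Set V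
  τA : Fin m → ℝ
  ωA : Fin m → ℝ

namespace CovState

variable {m : ℕ}

/-- `P_i^ID`, the set of vertices whose identifier equals `i`. -/
def Pid (σ : CovState V m) (i : Fin m) : Set V := {k | σ.ID k = i}

/-- The local likelihood function `Φ_i^A`. -/
def ΦA (σ : CovState V m) (Φ : V → ℝ → ℝ) (i : Fin m) (k : V) (t : ℝ) : ℝ :=
  if k ∈ σ.PA i ∧ (σ.τA i ≤ t - σ.ωA i ∨ k ∉ σ.Ppd i) then Φ k t else 0

/-- The prohibited region `Proh_i(t)`. -/
def Proh (σ : CovState V m) (i : Fin m) (t : ℝ) : Set V :=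
  {k ∈ σ.PA i | t - σ.ωA i < σ.τA i ∧ k ∈ σ.Ppd i}

/-- Continuous (flow) evolution of the state for `δ` time units: only the timers
change, each decreasing at unit rate until reaching `0`. -/
def decay (σ : CovState V m) (δ : ℝ) : CovState V m :=
  { σ with T := fun i => max (σ.T i - δ) 0 }

end CovState

/-- The trivial branch of Algorithm 1 (`T_i > 0` and `P_i^* = P_i`): only the
timing variables of the communicating agent are touched. -/
def NoopUpdate {m : ℕ} (i : Fin m) (t0 : ℝ) (σ σ' : CovState V m) : Prop :=
  σ' = { σ with τA := Function.update σ.τA i (σ.τA i - t0 + σ.ω i),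
                ωA := Function.update σ.ωA i t0,
                ω := Function.update σ.ω i t0 }

/-- The main branch of Algorithm 1 (together with the timer update, Algorithm 2),
executed upon an exchange between the base station and agent `i` at time `t0`. -/
def FullUpdate {m : ℕ} [Fintype V] (G : Env V) (s : Fin m → ℝ) (Φ : V → ℝ → ℝ)
    (Δbar ΔH : ℝ) (i : Fin m) (t0 : ℝ) (σ σ' : CovState V m) : Prop :=
  ∃ (cstar : V) (Pstar : Set V),
    -- `(cstar, Pstar)` is one of the candidate configurations:
    ((cstar = σ.c i ∧ Pstar = σ.Pid i) ∨
      (cstar ∈ σ.Pid i ∧ IsAddSet G s σ.P σ.c σ.T i (σ.Pid i) cstar Pstar)) ∧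
    -- and it minimizes the cost `H` among all candidate configurations:
    (∀ (k : V) (S : Set V),
      ((k = σ.c i ∧ S = σ.Pid i) ∨
        (k ∈ σ.Pid i ∧ IsAddSet G s σ.P σ.c σ.T i (σ.Pid i) k S)) →
      Hcost G s Φ (Function.update σ.c i cstar) (Function.update σ.P i Pstar) t0 ≤
        Hcost G s Φ (Function.update σ.c i k) (Function.update σ.P i S) t0) ∧
    σ'.P = Function.update σ.P i Pstar ∧
    σ'.PA = Function.update σ.PA i Pstar ∧
    σ'.c = Function.update σ.c i cstar ∧
    σ'.cA = Function.update σ.cA i cstar ∧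
    σ'.Ppd = Function.update σ.Ppd i (Pstar \ σ.Pid i) ∧
    σ'.ω = Function.update σ.ω i t0 ∧
    σ'.ωA = Function.update σ.ωA i t0 ∧
    σ'.ID = (fun k => if k ∈ Pstar then i else σ.ID k) ∧
    (∀ j : Fin m, j ≠ i → (σ.P j ∩ Pstar).Nonempty → σ'.T j = σ.ω j + Δbar - t0) ∧
    (∀ j : Fin m, j ≠ i → ¬(σ.P j ∩ Pstar).Nonempty → σ'.T j = σ.T j) ∧
    -- `T_i := Δ_max^Bf + Δ_H`, where `Δ_max^Bf` is as in Algorithm 2 (max ∅ := 0):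
    σ'.T i =
      max
        (sSup {x : ℝ | ∃ k ∈ σ.P i \ Pstar,
          x = (1 / s i) * (dInSet G (σ.P i) k (Pstar \ (Pstar \ σ.Pid i))).toReal})
        (sSup {x : ℝ | ∃ j : Fin m, j ≠ i ∧ (σ.P j ∩ Pstar).Nonempty ∧
          x = σ.ω j + Δbar +
            sSup {y : ℝ | ∃ k ∈ σ.P j ∩ Pstar,
              y = (1 / s j) * (dInSet G (σ.P j) k (σ.P j \ Pstar)).toReal} - t0}) + ΔH ∧
    -- `τ_i^A := Δ_max^Bf`:
    σ'.τA = Function.update σ.τA i (σ'.T i - ΔH)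

/-- The one-to-base-station update of Algorithm 1 performed at time `t0` upon an
exchange with agent `i`; `σ` is the state just before and `σ'` just after. -/
def UpdateAt {m : ℕ} [Fintype V] (G : Env V) (s : Fin m → ℝ) (Φ : V → ℝ → ℝ)
    (Δbar ΔH : ℝ) (i : Fin m) (t0 : ℝ) (σ σ' : CovState V m) : Prop :=
  (0 < σ.T i ∧ σ.Pid i = σ.P i ∧ NoopUpdate i t0 σ σ') ∨
  (¬(0 < σ.T i ∧ σ.Pid i = σ.P i) ∧ FullUpdate G s Φ Δbar ΔH i t0 σ σ')

/-- Assumption 1 (initialization). -/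
def InitOK {m : ℕ} (G : Env V) (ΔH : ℝ) (σ : CovState V m) : Prop :=
  IsPartition σ.P ∧ (∀ i, ConnIn G (σ.P i)) ∧
    ∀ i : Fin m,
      σ.PA i = σ.P i ∧ σ.P i = σ.Pid i ∧ σ.cA i = σ.c i ∧ σ.c i ∈ σ.P i ∧
      σ.Ppd i = ∅ ∧ σ.T i = 0 ∧ σ.ω i = 0 ∧ σ.ωA i = 0 ∧ σ.τA i = -ΔH

/-- An execution of the asynchronous one-to-base-station coverage scheme:
exchanges occur at the times `etime n` with the agents `eagent n`, successive
exchanges are separated by at least `Δlow`, each agent communicates at least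
every `Δ̄` time units, the state is initialized according to Assumption 1,
flows (only the timers decay) in between exchanges, and jumps according to
Algorithm 1 at each exchange. -/
structure Execution [Fintype V] (G : Env V) (m : ℕ) (s : Fin m → ℝ) (Φ : V → ℝ → ℝ)
    (Δlow Δbar ΔH : ℝ) where
  etime : ℕ → ℝ
  eagent : ℕ → Fin m
  state : ℝ → CovState V m
  s_pos : ∀ i, 0 < s i
  Δlow_pos : 0 < Δlow
  Δbar_pos : 0 < Δbar
  ΔH_pos : 0 < ΔH
  Φ_nonneg : ∀ k t, 0 ≤ Φ k t
  Φ_sum : ∀ t : ℝ, ∑ k : V, Φ k t = 1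
  etime_pos : ∀ n, 0 < etime n
  etime_sep : ∀ n, etime n + Δlow ≤ etime (n + 1)
  persistent : ∀ (i : Fin m) (t : ℝ), 0 ≤ t →
    ∃ n, eagent n = i ∧ t ≤ etime n ∧ etime n ≤ t + Δbar
  init : InitOK G ΔH (state 0)
  flow : ∀ t₁ t₂ : ℝ, 0 ≤ t₁ → t₁ ≤ t₂ →
    (∀ n, ¬(t₁ < etime n ∧ etime n ≤ t₂)) →
    state t₂ = (state t₁).decay (t₂ - t₁)
  jump : ∀ (n : ℕ) (t₁ : ℝ), 0 ≤ t₁ → t₁ < etime n →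
    (∀ p, ¬(t₁ < etime p ∧ etime p < etime n)) →
    UpdateAt G s Φ Δbar ΔH (eagent n) (etime n)
      ((state t₁).decay (etime n - t₁)) (state (etime n))

/-- Twice the sum, over the edges of `G`, of the graph distance between the
endpoints, halved (i.e. the sum over unordered edges). -/
def edgeSum [Fintype V] (G : Env V) : ℝ :=
  (1 / 2) * ∑ p : V × V, if G.adj p.1 p.2 then (dIn G Set.univ p.1 p.2).toReal else 0

/-- `d̄ := max_i (1/s_i) · Σ_{{k1,k2} ∈ E} d_Q(k1,k2)`. -/
def dbar {m : ℕ} [Fintype V] (G : Env V) (s : Fin m → ℝ) : ℝ :=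
  sSup {x : ℝ | ∃ i : Fin m, x = (1 / s i) * edgeSum G}

end
section Aux

variable {V : Type*}

theorem pathIn_mono (G : Env V) {S S' : Set V} (hSS : S ⊆ S') :
    ∀ p : List V, PathIn G S p → PathIn G S' p
  | [], hp => hp.elim
  | [a], hp => hSS hp
  | u :: v :: rest, hp =>
    ⟨hSS hp.1, hp.2.1, pathIn_mono G hSS (v :: rest) hp.2.2⟩

theorem pathIn_append (G : Env V) (S : Set V) :
    ∀ p q : List V, PathIn G S p → PathIn G S q → p.getLast? = q.head? →
      PathIn G S (p ++ q.tail)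
  | [], _, hp, _, _ => hp.elim
  | [a], q, hp, hq, hlast => by
      cases q with
      | nil => exact hq.elim
      | cons x t =>
        have hx : a = x := by simpa using hlast
        subst hx
        simpa using hq
  | u :: v :: rest, q, hp, hq, hlast =>
    ⟨hp.1, hp.2.1, pathIn_append G S (v :: rest) q hp.2.2 hq (by simpa using hlast)⟩

theorem dIn_mono (G : Env V) {S S' : Set V} (hSS : S ⊆ S') (a b : V) :
    dIn G S' a b ≤ dIn G S a b := by
  apply sInf_le_sInf
  rintro L ⟨p, hp, hh, hl, hlen⟩
  exact ⟨p, pathIn_mono G hSS p hp, hh, hl, hlen⟩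

end Aux

/-- closure of the additive-subset conditions under unions.
If `P_i^ID` is connected and disjoint from `⋃_{j ≠ i} P_j`, `k ∈ P_i^ID`, and
`S1`, `S2` are connected subsets each satisfying conditions (1) and (2) of the
additive-subset definition, then `S1 ∪ S2` is connected and also satisfies
conditions (1) and (2). -/
theorem additive_subset_union {V : Type*} {m : ℕ} (G : Env V)
    (s : Fin m → ℝ) (hs : ∀ i, 0 < s i)
    (P : Fin m → Set V) (c : Fin m → V) (T : Fin m → ℝ) (hT : ∀ j, 0 ≤ T j)
    (i : Fin m) (PidSet : Set V)
    (hconn : ConnIn G PidSet)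
    (hdisj : ∀ j : Fin m, j ≠ i → PidSet ∩ P j = ∅)
    (k : V) (hk : k ∈ PidSet)
    (S1 S2 : Set V)
    (h1 : AddCond G s P c T i PidSet k S1)
    (h2 : AddCond G s P c T i PidSet k S2) :
    AddCond G s P c T i PidSet k (S1 ∪ S2) := by
  obtain ⟨hc1, hid1, hcond1⟩ := h1
  obtain ⟨hc2, hid2, hcond2⟩ := h2
  have hk1 : k ∈ S1 := hid1 hk
  have hk2 : k ∈ S2 := hid2 hk
  have hmono1 : S1 ⊆ S1 ∪ S2 := Set.subset_union_left
  have hmono2 : S2 ⊆ S1 ∪ S2 := Set.subset_union_right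
  -- paths to / from k in the union
  have tok : ∀ a ∈ S1 ∪ S2, ∃ p : List V, PathIn G (S1 ∪ S2) p ∧
      p.head? = some a ∧ p.getLast? = some k := by
    rintro a (ha | ha)
    · obtain ⟨p, hp, hh, hl⟩ := hc1 a ha k hk1
      exact ⟨p, pathIn_mono G hmono1 p hp, hh, hl⟩
    · obtain ⟨p, hp, hh, hl⟩ := hc2 a ha k hk2
      exact ⟨p, pathIn_mono G hmono2 p hp, hh, hl⟩
  have fromk : ∀ b ∈ S1 ∪ S2, ∃ q : List V, PathIn G (S1 ∪ S2) q ∧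
      q.head? = some k ∧ q.getLast? = some b := by
    rintro b (hb | hb)
    · obtain ⟨q, hq, hh, hl⟩ := hc1 k hk1 b hb
      exact ⟨q, pathIn_mono G hmono1 q hq, hh, hl⟩
    · obtain ⟨q, hq, hh, hl⟩ := hc2 k hk2 b hb
      exact ⟨q, pathIn_mono G hmono2 q hq, hh, hl⟩
  refine ⟨?_, hid1.trans hmono1, ?_⟩
  · intro a ha b hb
    obtain ⟨p, hp, hph, hpl⟩ := tok a ha
    obtain ⟨q, hq, hqh, hql⟩ := fromk b hb
    refine ⟨p ++ q.tail, pathIn_append G _ p q hp hq (by rw [hpl, hqh]), ?_, ?_⟩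
    · cases p with
      | nil => exact absurd hp (by simp [PathIn])
      | cons x t => simpa using hph
    · cases q with
      | nil => exact absurd hq (by simp [PathIn])
      | cons x t =>
        cases t with
        | nil =>
          have : x = b := by simpa using hql
          subst this
          have hxk : (x : V) = k := by simpa using hqh
          simpa [hxk] using hpl
        | cons y r =>
          have htail : (x :: y :: r).tail = y :: r := rfl
          rw [htail, List.getLast?_append_of_ne_nil _ (by simp)]
          simpa using hql
  · intro j hj h hh
    obtain ⟨hhS, hhP⟩ := hh
    rcases hhS with hhS | hhS
    · obtain ⟨hT0, hlt⟩ := hcond1 j hj h ⟨hhS, hhP⟩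
      refine ⟨hT0, lt_of_le_of_lt ?_ hlt⟩
      exact mul_le_mul_right (dIn_mono G hmono1 h k) _
    · obtain ⟨hT0, hlt⟩ := hcond2 j hj h ⟨hhS, hhP⟩
      refine ⟨hT0, lt_of_le_of_lt ?_ hlt⟩
      exact mul_le_mul_right (dIn_mono G hmono2 h k) _
end

section
/- Suppose Assumption 1 holds and that, at the time of each exchange occurring prior to a fixed time t̄≥0, the required algorithmic constructions are well-posed and the base station and the communicating agent update their respective variables via Algorithm 1. Then for every k∈Q and every time t≤t̄: (1) k∈P_{ID_k}; (2) k belongs to at most 2 elements of P; (3) if T_{ID_k}=0 then k∉P_j for every j≠ID_k; and (4) if k∈P_j with j≠ID_k, then P_j∩P^{ID}_ℓ=∅ for every ℓ∉{j, ID_k}. -/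
open scoped Classical ENNReal

section Aux

set_option linter.unusedSectionVars false

open Function

variable {V : Type*} [Fintype V] {m : ℕ}
  {G : Env V} {s : Fin m → ℝ} {Φ : V → ℝ → ℝ} {Δlow Δbar ΔH : ℝ}

lemma mem_Pid {σ : CovState V m} {k : V} {i : Fin m} : k ∈ σ.Pid i ↔ σ.ID k = i := Iff.rfl

@[simp] lemma decay_P (σ : CovState V m) (δ : ℝ) : (σ.decay δ).P = σ.P := rfl
@[simp] lemma decay_ID (σ : CovState V m) (δ : ℝ) : (σ.decay δ).ID = σ.ID := rfl
@[simp] lemma decay_ω (σ : CovState V m) (δ : ℝ) : (σ.decay δ).ω = σ.ω := rfl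
@[simp] lemma decay_Pid (σ : CovState V m) (δ : ℝ) : (σ.decay δ).Pid = σ.Pid := rfl
@[simp] lemma decay_T (σ : CovState V m) (δ : ℝ) (i : Fin m) :
    (σ.decay δ).T i = max (σ.T i - δ) 0 := rfl

/-- The inductive invariant (core part, not referring to exchange times). -/
def InvCore (Δbar ΔH : ℝ) (σ : CovState V m) (t : ℝ) : Prop :=
  (∀ k, k ∈ σ.P (σ.ID k)) ∧
  (∀ k j1 j2, j1 ≠ j2 → k ∈ σ.P j1 → k ∈ σ.P j2 → σ.ID k = j1 ∨ σ.ID k = j2) ∧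
  (∀ j, ∃ i, σ.P j ⊆ σ.Pid j ∪ σ.Pid i) ∧
  (∀ i, (∃ k j, j ≠ i ∧ σ.ID k = i ∧ k ∈ σ.P j) → σ.P i ⊆ σ.Pid i) ∧
  (∀ k j, j ≠ σ.ID k → k ∈ σ.P j → σ.ω j + Δbar - t + ΔH ≤ σ.T (σ.ID k)) ∧
  (∀ j, (∃ k, k ∈ σ.P j ∧ σ.ID k ≠ j) → σ.ω j + Δbar - t ≤ σ.T j) ∧
  (∀ j, 0 ≤ σ.ω j ∧ σ.ω j ≤ t)

/-- The exchange-time part of the invariant: `ω` records the most recent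
exchange time of each agent. -/
def InvG (E : Execution G m s Φ Δlow Δbar ΔH) (σ : CovState V m) (t : ℝ) : Prop :=
  ∀ n : ℕ, ¬(σ.ω (E.eagent n) < E.etime n ∧ E.etime n ≤ t)

lemma etime_gap (E : Execution G m s Φ Δlow Δbar ΔH) :
    ∀ {n p : ℕ}, n < p → E.etime n + Δlow ≤ E.etime p := by
  intro n p h
  induction p with
  | zero => omega
  | succ q ih =>
    rcases Nat.lt_succ_iff_lt_or_eq.mp h with h' | h'
    · have h2 := E.etime_sep q
      have := ih h'
      have hl := E.Δlow_pos
      linarith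
    · subst h'; exact E.etime_sep n

lemma etime_strictMono (E : Execution G m s Φ Δlow Δbar ΔH) : StrictMono E.etime := by
  intro n p h
  have := etime_gap E h
  have := E.Δlow_pos
  linarith

lemma etime_inj (E : Execution G m s Φ Δlow Δbar ΔH) {n p : ℕ}
    (h : E.etime n = E.etime p) : n = p := (etime_strictMono E).injective h

lemma etime_growth (E : Execution G m s Φ Δlow Δbar ΔH) :
    ∀ n : ℕ, (n : ℝ) * Δlow ≤ E.etime n := by
  intro n
  induction n with
  | zero => simp; exact le_of_lt (E.etime_pos 0)
  | succ q ih =>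
    have h := E.etime_sep q
    push_cast
    linarith

lemma etime_unbounded (E : Execution G m s Φ Δlow Δbar ΔH) (t : ℝ) :
    ∃ n : ℕ, t < E.etime n := by
  obtain ⟨n, hn⟩ := exists_nat_gt (t / Δlow)
  refine ⟨n, lt_of_lt_of_le ?_ (etime_growth E n)⟩
  have := E.Δlow_pos
  calc t = (t / Δlow) * Δlow := by field_simp
    _ < n * Δlow := by apply mul_lt_mul_of_pos_right hn this

/-- If no exchange of agent `j` occurred strictly inside `(w, t)`, then `t ≤ w + Δ̄`. -/
lemma pos_le (E : Execution G m s Φ Δlow Δbar ΔH) {j : Fin m} {w t : ℝ} (hw : 0 ≤ w)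
    (hno : ∀ n, E.eagent n = j → ¬(w < E.etime n ∧ E.etime n < t)) : t ≤ w + Δbar := by
  by_contra h
  push_neg at h
  set ε := (t - (w + Δbar)) / 2 with hε
  have hεpos : 0 < ε := by simp [hε]; linarith
  obtain ⟨n, hag, h1, h2⟩ := E.persistent j (w + ε) (by linarith)
  exact hno n hag ⟨by linarith, by linarith⟩

/-- Strict version at another agent's exchange time. -/
lemma pos_lt (E : Execution G m s Φ Δlow Δbar ΔH) {j : Fin m} {n₀ : ℕ} {w : ℝ}
    (hja : E.eagent n₀ ≠ j) (hw : 0 ≤ w)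
    (hno : ∀ n, E.eagent n = j → ¬(w < E.etime n ∧ E.etime n < E.etime n₀)) :
    E.etime n₀ < w + Δbar := by
  by_contra h
  push_neg at h
  have hl := E.Δlow_pos
  obtain ⟨p, hag, h1, h2⟩ := E.persistent j (w + Δlow / 2) (by linarith)
  have hge : E.etime n₀ ≤ E.etime p := by
    by_contra h3
    push_neg at h3
    exact hno p hag ⟨by linarith, h3⟩
  rcases eq_or_lt_of_le hge with heq | hlt
  · have hnp : n₀ = p := etime_inj E heq
    exact hja (hnp ▸ hag)
  · have hne : n₀ < p := (etime_strictMono E).lt_iff_lt.mp hlt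
    have := etime_gap E hne
    linarith

lemma core_decay {σ : CovState V m} {t t' : ℝ} (h : InvCore Δbar ΔH σ t) (htt' : t ≤ t') :
    InvCore Δbar ΔH (σ.decay (t' - t)) t' := by
  obtain ⟨hA, hC, hD, hE5, hF, hF2, hω⟩ := h
  refine ⟨hA, hC, hD, hE5, ?_, ?_, ?_⟩
  · intro k j hj hk
    have := hF k j hj hk
    simp only [decay_P, decay_ID, decay_ω, decay_T] at *
    exact le_trans (by linarith) (le_max_left _ _)
  · intro j hj
    have := hF2 j hj
    simp only [decay_P, decay_ID, decay_ω, decay_T] at *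
    exact le_trans (by linarith) (le_max_left _ _)
  · intro j
    have := hω j
    simp only [decay_ω]
    exact ⟨this.1, le_trans this.2 htt'⟩

lemma init_core (E : Execution G m s Φ Δlow Δbar ΔH) :
    InvCore Δbar ΔH (E.state 0) 0 := by
  obtain ⟨hpart, hconn, hall⟩ := E.init
  set σ := E.state 0
  have hPid : ∀ i, σ.P i = σ.Pid i := fun i => ((hall i).2.1)
  have hid : ∀ k j, k ∈ σ.P j → σ.ID k = j := by
    intro k j hk; rw [hPid j] at hk; exact hk
  refine ⟨?_, ?_, ?_, ?_, ?_, ?_, ?_⟩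
  · intro k; rw [hPid]; exact rfl
  · intro k j1 j2 _ h1 _; exact Or.inl (hid k j1 h1)
  · intro j; exact ⟨j, by rw [hPid]; exact Set.subset_union_left⟩
  · intro i _; rw [hPid]
  · intro k j hj hk; exact absurd (hid k j hk).symm hj
  · intro j ⟨k, hk, hkid⟩; exact absurd (hid k j hk) hkid
  · intro j
    have := (hall j).2.2.2.2.2.2.1
    rw [this]; exact ⟨le_refl 0, le_refl 0⟩

lemma init_G (E : Execution G m s Φ Δlow Δbar ΔH) : InvG E (E.state 0) 0 := by
  intro n ⟨_, h2⟩
  exact absurd h2 (not_le.mpr (E.etime_pos n))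

lemma jump_inv (E : Execution G m s Φ Δlow Δbar ΔH) (n₀ : ℕ) {σ : CovState V m}
    (hcore : InvCore Δbar ΔH σ (E.etime n₀))
    (hGop : ∀ n, ¬(σ.ω (E.eagent n) < E.etime n ∧ E.etime n < E.etime n₀))
    (hupd : UpdateAt G s Φ Δbar ΔH (E.eagent n₀) (E.etime n₀) σ (E.state (E.etime n₀))) :
    InvCore Δbar ΔH (E.state (E.etime n₀)) (E.etime n₀) ∧
      InvG E (E.state (E.etime n₀)) (E.etime n₀) := by
  obtain ⟨hA, hC, hD, hE5, hF, hF2, hω⟩ := hcore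
  set a := E.eagent n₀ with ha
  set t0 := E.etime n₀ with ht0
  set σ' := E.state t0 with hσ'
  have ht0pos : 0 < t0 := E.etime_pos n₀
  have hΔH := E.ΔH_pos
  have hωn : ∀ j, 0 ≤ σ.ω j := fun j => (hω j).1
  have hposall : ∀ j, t0 ≤ σ.ω j + Δbar := by
    intro j
    refine pos_le (j := j) E (hωn j) ?_
    intro n hag hn
    exact hGop n (by rw [hag]; exact hn)
  have hposlt : ∀ j, j ≠ a → t0 < σ.ω j + Δbar := by
    intro j hj
    refine pos_lt (j := j) E (Ne.symm hj) (hωn j) ?_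
    intro n hag hn
    exact hGop n (by rw [hag]; exact hn)
  have hFpos : ∀ k j, j ≠ σ.ID k → k ∈ σ.P j → 0 < σ.T (σ.ID k) := by
    intro k j hj hk
    have h1 := hF k j hj hk
    have h2 := hposall j
    linarith
  have hF2pos : ∀ j, j ≠ a → (∃ k, k ∈ σ.P j ∧ σ.ID k ≠ j) → 0 < σ.T j := by
    intro j hja hex
    have h1 := hF2 j hex
    have h2 := hposlt j hja
    linarith
  have hinjt : ∀ n, E.etime n = t0 → n = n₀ := fun n h => etime_inj E h
  rcases hupd with ⟨hTpos, hPP, hnoop⟩ |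
    ⟨-, cstar, Pstar, hcand, -, hP, hPA, hc, hcA, hPpd, hωe, hωA, hID, hTset, hTkeep, hTa, hτ⟩
  · -- Noop branch
    have hclean : ∀ k, k ∈ σ.P a → σ.ID k = a := by
      intro k hk; rw [← hPP] at hk; exact hk
    rw [hnoop]
    refine ⟨⟨hA, hC, hD, hE5, ?_, ?_, ?_⟩, ?_⟩
    · intro k j hj hk
      show Function.update σ.ω a t0 j + Δbar - t0 + ΔH ≤ σ.T (σ.ID k)
      by_cases hja : j = a
      · exact (hj (hja.trans (hclean k (hja ▸ hk)).symm)).elim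
      · rw [Function.update_of_ne hja]
        exact hF k j hj hk
    · rintro j ⟨k, hk, hkid⟩
      show Function.update σ.ω a t0 j + Δbar - t0 ≤ σ.T j
      by_cases hja : j = a
      · exact (hkid (hclean k (hja ▸ hk) |>.trans hja.symm)).elim
      · rw [Function.update_of_ne hja]
        exact hF2 j ⟨k, hk, hkid⟩
    · intro j
      show 0 ≤ Function.update σ.ω a t0 j ∧ Function.update σ.ω a t0 j ≤ t0
      by_cases hja : j = a
      · subst hja; rw [Function.update_self]; exact ⟨le_of_lt ht0pos, le_rfl⟩
      · rw [Function.update_of_ne hja]; exact hω j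
    · rintro n ⟨h1, h2⟩
      have h1' : Function.update σ.ω a t0 (E.eagent n) < E.etime n := h1
      by_cases hna : E.eagent n = a
      · rw [hna, Function.update_self] at h1'
        linarith
      · rw [Function.update_of_ne hna] at h1'
        rcases lt_or_eq_of_le h2 with h3 | h3
        · exact hGop n ⟨h1', h3⟩
        · have hn : n = n₀ := hinjt n h3
          rw [hn] at hna
          exact hna rfl
  · -- Full branch
    have hPsub : σ.Pid a ⊆ Pstar := by
      rcases hcand with ⟨-, h⟩ | ⟨-, hadd⟩
      · rw [h]
      · exact hadd.1.2.1
    have hID1 : ∀ k, k ∈ Pstar → σ'.ID k = a := by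
      intro k hk; simp only [hID]; rw [if_pos hk]
    have hID2 : ∀ k, k ∉ Pstar → σ'.ID k = σ.ID k := by
      intro k hk; simp only [hID]; rw [if_neg hk]
    have hIDnot : ∀ k, k ∉ Pstar → σ.ID k ≠ a := by
      intro k hk h; exact hk (hPsub h)
    have hP'a : σ'.P a = Pstar := by rw [hP]; simp
    have hP'o : ∀ j, j ≠ a → σ'.P j = σ.P j := by
      intro j hj; rw [hP]; exact Function.update_of_ne hj _ _
    have hω'a : σ'.ω a = t0 := by rw [hωe]; simp
    have hω'o : ∀ j, j ≠ a → σ'.ω j = σ.ω j := by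
      intro j hj; rw [hωe]; exact Function.update_of_ne hj _ _
    have hPid'a : σ'.Pid a = Pstar := by
      ext k
      simp only [mem_Pid]
      constructor
      · intro h
        by_cases hk : k ∈ Pstar
        · exact hk
        · rw [hID2 k hk] at h
          exact absurd h (hIDnot k hk)
      · exact hID1 k
    have hPid'o : ∀ ℓ, ℓ ≠ a → σ'.Pid ℓ = σ.Pid ℓ \ Pstar := by
      intro ℓ hℓ; ext k
      simp only [mem_Pid, Set.mem_diff]
      by_cases hk : k ∈ Pstar
      · rw [hID1 k hk]
        exact ⟨fun h => absurd h.symm hℓ, fun h => absurd hk h.2⟩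
      · rw [hID2 k hk]
        exact ⟨fun h => ⟨h, hk⟩, fun h => h.1⟩
    have hT0 : (∀ ℓ, ℓ ≠ a → ∀ h, h ∈ Pstar → h ∈ σ.P ℓ → σ.T ℓ = 0) ∨ Pstar = σ.Pid a := by
      rcases hcand with ⟨-, h⟩ | ⟨-, hadd⟩
      · exact Or.inr h
      · exact Or.inl (fun ℓ hℓ h h1 h2 => (hadd.1.2.2 ℓ hℓ h ⟨h1, h2⟩).1)
    have hone : ∀ k j1 j2, j1 ≠ a → σ.ID k = j1 → j2 ≠ j1 → k ∈ σ.P j2 → k ∈ Pstar → False := by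
      intro k j1 j2 hj1a hid hne hk2 hks
      rcases hT0 with hT0' | hPidc
      · have h1 : k ∈ σ.P j1 := by rw [← hid]; exact hA k
        have hTj1 : σ.T j1 = 0 := hT0' j1 hj1a k hks h1
        have hpos := hFpos k j2 (by rw [hid]; exact hne) hk2
        rw [hid] at hpos
        linarith
      · rw [hPidc] at hks
        exact hj1a (hid.symm.trans hks)
    have htriple : ∀ k j1 j2, j1 ≠ j2 → j1 ≠ a → j2 ≠ a → k ∈ Pstar →
        k ∈ σ.P j1 → k ∈ σ.P j2 → False := by
      intro k j1 j2 hj12 hj1a hj2a hks h1 h2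
      rcases hC k j1 j2 hj12 h1 h2 with h | h
      · exact hone k j1 j2 hj1a h (Ne.symm hj12) h2 hks
      · exact hone k j2 j1 hj2a h hj12 h1 hks
    have hnoreset : ∀ i, i ≠ a → (∃ k j, j ≠ i ∧ σ.ID k = i ∧ k ∈ σ.P j) →
        σ.P i ∩ Pstar = ∅ := by
      intro i hi hown
      have hpure := hE5 i hown
      rw [Set.eq_empty_iff_forall_notMem]
      rintro h ⟨hhP, hhS⟩
      rcases hT0 with hT0' | hPidc
      · have hTi : σ.T i = 0 := hT0' i hi h hhS hhP
        obtain ⟨k, j, hji, hkid, hkP⟩ := hown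
        have hpos := hFpos k j (by rw [hkid]; exact hji) hkP
        rw [hkid] at hpos
        linarith
      · have h1 : σ.ID h = i := hpure hhP
        have h2 : σ.ID h = a := by rw [hPidc] at hhS; exact hhS
        exact hi (h1.symm.trans h2)
    have hcleanj : ∀ j, j ≠ a → (σ.P j ∩ Pstar).Nonempty → ∀ k, k ∈ σ.P j → k ∉ Pstar →
        σ.ID k = j := by
      intro j hj hx k hkP hkS
      by_contra hne
      rcases hT0 with hT0' | hPidc
      · obtain ⟨h, hh1, hh2⟩ := hx
        have hTj : σ.T j = 0 := hT0' j hj h hh2 hh1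
        have := hF2pos j hj ⟨k, hkP, hne⟩
        linarith
      · obtain ⟨h, hh1, hh2⟩ := hx
        have hha : σ.ID h = a := by rw [hPidc] at hh2; exact hh2
        obtain ⟨i₀, hDj⟩ := hD j
        have hi₀ : i₀ = a := by
          rcases hDj hh1 with h' | h'
          · exact absurd (hha.symm.trans h').symm hj
          · exact (hha.symm.trans h').symm
        rcases hDj hkP with h' | h'
        · exact hne h'
        · rw [hi₀] at h'
          exact hkS (hPsub h')
    refine ⟨⟨?_, ?_, ?_, ?_, ?_, ?_, ?_⟩, ?_⟩
    · -- (A)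
      intro k
      by_cases hk : k ∈ Pstar
      · rw [hID1 k hk, hP'a]; exact hk
      · rw [hID2 k hk, hP'o _ (hIDnot k hk)]; exact hA k
    · -- (C)
      intro k j1 j2 hj12 h1 h2
      by_cases hk : k ∈ Pstar
      · by_cases hj1 : j1 = a
        · exact Or.inl (by rw [hID1 k hk, hj1])
        · by_cases hj2 : j2 = a
          · exact Or.inr (by rw [hID1 k hk, hj2])
          · rw [hP'o j1 hj1] at h1
            rw [hP'o j2 hj2] at h2
            exact (htriple k j1 j2 hj12 hj1 hj2 hk h1 h2).elim
      · have hj1 : j1 ≠ a := by rintro rfl; rw [hP'a] at h1; exact hk h1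
        have hj2 : j2 ≠ a := by rintro rfl; rw [hP'a] at h2; exact hk h2
        rw [hP'o j1 hj1] at h1
        rw [hP'o j2 hj2] at h2
        rw [hID2 k hk]
        exact hC k j1 j2 hj12 h1 h2
    · -- (D)
      intro j
      by_cases hja : j = a
      · subst hja
        exact ⟨a, by rw [hP'a, hPid'a]; exact Set.subset_union_left⟩
      · rw [hP'o j hja, hPid'o j hja]
        by_cases hx : (σ.P j ∩ Pstar).Nonempty
        · refine ⟨a, ?_⟩
          rw [hPid'a]
          intro k hkP
          by_cases hk : k ∈ Pstar
          · exact Or.inr hk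
          · exact Or.inl ⟨hcleanj j hja hx k hkP hk, hk⟩
        · have hnx : ∀ k, k ∈ σ.P j → k ∉ Pstar := fun k hk hs => hx ⟨k, hk, hs⟩
          obtain ⟨i₀, hDj⟩ := hD j
          by_cases hi₀ : i₀ = a
          · refine ⟨j, ?_⟩
            intro k hkP
            have hkj : σ.ID k = j := by
              rcases hDj hkP with h' | h'
              · exact h'
              · rw [hi₀] at h'
                exact absurd (hPsub h') (hnx k hkP)
            exact Or.inl ⟨hkj, hnx k hkP⟩
          · refine ⟨i₀, ?_⟩
            rw [hPid'o i₀ hi₀]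
            intro k hkP
            rcases hDj hkP with h' | h'
            · exact Or.inl ⟨h', hnx k hkP⟩
            · exact Or.inr ⟨h', hnx k hkP⟩
    · -- (E5)
      intro i hown
      by_cases hia : i = a
      · subst hia
        rw [hP'a, hPid'a]
      · obtain ⟨k, j, hji, hkid, hkP⟩ := hown
        have hk : k ∉ Pstar := by
          intro hk
          rw [hID1 k hk] at hkid
          exact hia hkid.symm
        rw [hID2 k hk] at hkid
        have hja : j ≠ a := by rintro rfl; rw [hP'a] at hkP; exact hk hkP
        rw [hP'o j hja] at hkP
        have hownold : ∃ k j, j ≠ i ∧ σ.ID k = i ∧ k ∈ σ.P j := ⟨k, j, hji, hkid, hkP⟩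
        have hres := hnoreset i hia hownold
        rw [hP'o i hia, hPid'o i hia]
        intro x hx
        exact ⟨hE5 i hownold hx,
          fun hxs => (Set.eq_empty_iff_forall_notMem.mp hres x ⟨hx, hxs⟩)⟩
    · -- (F)
      intro k j hj hk
      by_cases hks : k ∈ Pstar
      · rw [hID1 k hks] at hj ⊢
        rw [hP'o j hj] at hk
        rw [hω'o j hj, hTa]
        have hs0 : 0 ≤ 1 / s j := le_of_lt (one_div_pos.mpr (E.s_pos j))
        have hinner_bdd : BddAbove {y : ℝ | ∃ k' ∈ σ.P j ∩ Pstar,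
            y = 1 / s j * (dInSet G (σ.P j) k' (σ.P j \ Pstar)).toReal} := by
          refine BddAbove.mono ?_ (Set.finite_range fun k' : V =>
            1 / s j * (dInSet G (σ.P j) k' (σ.P j \ Pstar)).toReal).bddAbove
          rintro y ⟨k', -, hy⟩
          exact ⟨k', hy.symm⟩
        have hinner0 : 0 ≤ sSup {y : ℝ | ∃ k' ∈ σ.P j ∩ Pstar,
            y = 1 / s j * (dInSet G (σ.P j) k' (σ.P j \ Pstar)).toReal} := by
          have hmem0 : 1 / s j * (dInSet G (σ.P j) k (σ.P j \ Pstar)).toReal ∈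
              {y : ℝ | ∃ k' ∈ σ.P j ∩ Pstar,
                y = 1 / s j * (dInSet G (σ.P j) k' (σ.P j \ Pstar)).toReal} :=
            ⟨k, ⟨hk, hks⟩, rfl⟩
          exact le_trans (mul_nonneg hs0 ENNReal.toReal_nonneg) (le_csSup hinner_bdd hmem0)
        have houter_bdd : BddAbove {x : ℝ | ∃ j' : Fin m, j' ≠ a ∧ (σ.P j' ∩ Pstar).Nonempty ∧
            x = σ.ω j' + Δbar + sSup {y : ℝ | ∃ k' ∈ σ.P j' ∩ Pstar,
              y = 1 / s j' * (dInSet G (σ.P j') k' (σ.P j' \ Pstar)).toReal} - t0} := by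
          refine BddAbove.mono ?_ (Set.finite_range fun j' : Fin m =>
            σ.ω j' + Δbar + sSup {y : ℝ | ∃ k' ∈ σ.P j' ∩ Pstar,
              y = 1 / s j' * (dInSet G (σ.P j') k' (σ.P j' \ Pstar)).toReal} - t0).bddAbove
          rintro x ⟨j', -, -, hx⟩
          exact ⟨j', hx.symm⟩
        have hmem : σ.ω j + Δbar + sSup {y : ℝ | ∃ k' ∈ σ.P j ∩ Pstar,
            y = 1 / s j * (dInSet G (σ.P j) k' (σ.P j \ Pstar)).toReal} - t0 ∈
            {x : ℝ | ∃ j' : Fin m, j' ≠ a ∧ (σ.P j' ∩ Pstar).Nonempty ∧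
            x = σ.ω j' + Δbar + sSup {y : ℝ | ∃ k' ∈ σ.P j' ∩ Pstar,
              y = 1 / s j' * (dInSet G (σ.P j') k' (σ.P j' \ Pstar)).toReal} - t0} :=
          ⟨j, hj, ⟨k, hk, hks⟩, rfl⟩
        have hle := le_csSup houter_bdd hmem
        refine le_trans ?_ (add_le_add_left (le_max_right _ _) ΔH)
        linarith
      · rw [hID2 k hks] at hj ⊢
        have hia : σ.ID k ≠ a := hIDnot k hks
        have hja : j ≠ a := by rintro rfl; rw [hP'a] at hk; exact hks hk
        rw [hP'o j hja] at hk
        rw [hω'o j hja]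
        have hown : ∃ k' j', j' ≠ σ.ID k ∧ σ.ID k' = σ.ID k ∧ k' ∈ σ.P j' := ⟨k, j, hj, rfl, hk⟩
        have hres := hnoreset (σ.ID k) hia hown
        rw [hTkeep (σ.ID k) hia (by rw [hres]; exact Set.not_nonempty_empty)]
        exact hF k j hj hk
    · -- (F2)
      rintro j ⟨k, hkP, hkid⟩
      by_cases hja : j = a
      · subst hja
        rw [hP'a] at hkP
        exact absurd (hID1 k hkP) hkid
      · rw [hω'o j hja]
        by_cases hx : (σ.P j ∩ Pstar).Nonempty
        · rw [hTset j hja hx]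
        · rw [hTkeep j hja hx]
          rw [hP'o j hja] at hkP
          have hks : k ∉ Pstar := fun h => hx ⟨k, hkP, h⟩
          rw [hID2 k hks] at hkid
          exact hF2 j ⟨k, hkP, hkid⟩
    · -- ω bounds
      intro j
      by_cases hja : j = a
      · rw [hja, hω'a]; exact ⟨le_of_lt ht0pos, le_rfl⟩
      · rw [hω'o j hja]; exact hω j
    · -- InvG
      rintro n ⟨h1, h2⟩
      by_cases hna : E.eagent n = a
      · rw [hna, hω'a] at h1
        linarith
      · rw [hω'o _ hna] at h1
        rcases lt_or_eq_of_le h2 with h3 | h3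
        · exact hGop n ⟨h1, h3⟩
        · have hn : n = n₀ := hinjt n h3
          rw [hn] at hna
          exact hna rfl

lemma inv_at_etime (E : Execution G m s Φ Δlow Δbar ΔH) :
    ∀ n : ℕ, InvCore Δbar ΔH (E.state (E.etime n)) (E.etime n) ∧
      InvG E (E.state (E.etime n)) (E.etime n) := by
  intro n
  induction n using Nat.strong_induction_on with
  | _ n ih =>
    have prev : ∃ t₁, 0 ≤ t₁ ∧ t₁ < E.etime n ∧
        (∀ p, ¬(t₁ < E.etime p ∧ E.etime p < E.etime n)) ∧
        InvCore Δbar ΔH (E.state t₁) t₁ ∧ InvG E (E.state t₁) t₁ := by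
      cases n with
      | zero =>
        refine ⟨0, le_rfl, E.etime_pos 0, ?_, init_core E, init_G E⟩
        rintro p ⟨h1, h2⟩
        have h3 : E.etime 0 ≤ E.etime p := (etime_strictMono E).monotone (Nat.zero_le p)
        linarith
      | succ q =>
        refine ⟨E.etime q, le_of_lt (E.etime_pos q), etime_strictMono E (Nat.lt_succ_self q),
          ?_, (ih q (Nat.lt_succ_self q)).1, (ih q (Nat.lt_succ_self q)).2⟩
        rintro p ⟨h1, h2⟩
        have hq : q < p := (etime_strictMono E).lt_iff_lt.mp h1
        have hp : p < q + 1 := (etime_strictMono E).lt_iff_lt.mp h2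
        omega
    obtain ⟨t₁, ht₁0, ht₁lt, hnomid, hcore₁, hG₁⟩ := prev
    have hupd := E.jump n t₁ ht₁0 ht₁lt hnomid
    have hσcore : InvCore Δbar ΔH ((E.state t₁).decay (E.etime n - t₁)) (E.etime n) :=
      core_decay hcore₁ (le_of_lt ht₁lt)
    have hσG : ∀ p, ¬(((E.state t₁).decay (E.etime n - t₁)).ω (E.eagent p) < E.etime p ∧
        E.etime p < E.etime n) := by
      rintro p ⟨h1, h2⟩
      simp only [decay_ω] at h1
      rcases le_or_gt (E.etime p) t₁ with h3 | h3
      · exact hG₁ p ⟨h1, h3⟩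
      · exact hnomid p ⟨h3, h2⟩
    exact jump_inv E n hσcore hσG hupd

lemma inv_at_time (E : Execution G m s Φ Δlow Δbar ΔH) (t : ℝ) (ht : 0 ≤ t) :
    InvCore Δbar ΔH (E.state t) t ∧ InvG E (E.state t) t := by
  by_cases hex : ∃ n, E.etime n ≤ t
  · have hbig : ∃ n, t < E.etime n := etime_unbounded E t
    set n₁ := Nat.find hbig with hn₁
    have hspec : t < E.etime n₁ := Nat.find_spec hbig
    have hn₁pos : n₁ ≠ 0 := by
      intro h0
      obtain ⟨q, hq⟩ := hex
      have h3 : E.etime n₁ ≤ E.etime q := by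
        rw [h0]; exact (etime_strictMono E).monotone (Nat.zero_le q)
      linarith
    set n' := n₁ - 1 with hn'
    have hn'lt : n' < n₁ := Nat.sub_lt (Nat.pos_of_ne_zero hn₁pos) one_pos
    have hle : E.etime n' ≤ t := not_lt.mp (Nat.find_min hbig hn'lt)
    have hnone : ∀ p, ¬(E.etime n' < E.etime p ∧ E.etime p ≤ t) := by
      rintro p ⟨h1, h2⟩
      have hp1 : p < n₁ := by
        by_contra h3
        push_neg at h3
        have h4 : E.etime n₁ ≤ E.etime p := (etime_strictMono E).monotone h3
        linarith
      have hp2 : p ≤ n' := by omega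
      have h5 := (etime_strictMono E).monotone hp2
      linarith
    have hflow := E.flow (E.etime n') t (le_of_lt (E.etime_pos n')) hle hnone
    obtain ⟨hcore', hG'⟩ := inv_at_etime E n'
    rw [hflow]
    refine ⟨core_decay hcore' hle, ?_⟩
    rintro p ⟨h1, h2⟩
    simp only [decay_ω] at h1
    rcases le_or_gt (E.etime p) (E.etime n') with h3 | h3
    · exact hG' p ⟨h1, h3⟩
    · exact hnone p ⟨h3, h2⟩
  · push_neg at hex
    have hflow := E.flow 0 t le_rfl ht (fun n h => absurd h.2 (not_le.mpr (hex n)))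
    rw [hflow]
    refine ⟨core_decay (init_core E) ht, ?_⟩
    rintro p ⟨h1, h2⟩
    exact absurd h2 (not_le.mpr (hex p))

end Aux

/-- Proposition 2, set membership.  Under Assumption 1, with
all exchanges prior to a fixed time `t̄ ≥ 0` well-posed and performed via
Algorithm 1, for every `k ∈ Q` and every time `t ≤ t̄`: (1) `k ∈ P_{ID_k}`;
(2) `k` belongs to at most two elements of `P`; (3) if `T_{ID_k} = 0` then
`k ∉ P_j` for every `j ≠ ID_k`; and (4) if `k ∈ P_j` with `j ≠ ID_k`, then
`P_j ∩ P^ID_ℓ = ∅` for every `ℓ ∉ {j, ID_k}`. -/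
theorem set_membership {V : Type*} [Fintype V] [DecidableEq V] {m : ℕ}
    (G : Env V) (s : Fin m → ℝ) (Φ : V → ℝ → ℝ) (Δlow Δbar ΔH : ℝ)
    (E : Execution G m s Φ Δlow Δbar ΔH)
    (tbar : ℝ) (htbar : 0 ≤ tbar) :
    ∀ (k : V) (t : ℝ), 0 ≤ t → t ≤ tbar →
      (k ∈ (E.state t).P ((E.state t).ID k)) ∧
      ({i : Fin m | k ∈ (E.state t).P i}.encard ≤ 2) ∧
      ((E.state t).T ((E.state t).ID k) = 0 →
        ∀ j : Fin m, j ≠ (E.state t).ID k → k ∉ (E.state t).P j) ∧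
      (∀ j : Fin m, j ≠ (E.state t).ID k → k ∈ (E.state t).P j →
        ∀ l : Fin m, l ≠ j → l ≠ (E.state t).ID k →
          (E.state t).P j ∩ (E.state t).Pid l = ∅) := by
  intro k t ht htt
  obtain ⟨⟨hA, hC, hD, hE5, hF, hF2, hω⟩, hG⟩ := inv_at_time E t ht
  refine ⟨hA k, ?_, ?_, ?_⟩
  · by_cases hex : ∃ j, k ∈ (E.state t).P j ∧ j ≠ (E.state t).ID k
    · obtain ⟨j, hj1, hj2⟩ := hex
      have hsub : {i : Fin m | k ∈ (E.state t).P i} ⊆ {(E.state t).ID k, j} := by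
        intro j' hj'
        simp only [Set.mem_setOf_eq] at hj'
        by_cases h1 : j' = j
        · exact Or.inr h1
        · by_cases h2 : j' = (E.state t).ID k
          · exact Or.inl h2
          · rcases hC k j j' (fun h => h1 h.symm) hj1 hj' with h | h
            · exact absurd h.symm hj2
            · exact absurd h.symm h2
      calc {i : Fin m | k ∈ (E.state t).P i}.encard
          ≤ ({(E.state t).ID k, j} : Set (Fin m)).encard := Set.encard_mono hsub
        _ ≤ 2 := by
            refine le_trans (Set.encard_insert_le _ _) ?_
            rw [Set.encard_singleton]
            norm_num
    · push_neg at hex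
      have hsub : {i : Fin m | k ∈ (E.state t).P i} ⊆ {(E.state t).ID k} := by
        intro j' hj'
        simp only [Set.mem_setOf_eq] at hj'
        exact hex j' hj'
      calc {i : Fin m | k ∈ (E.state t).P i}.encard
          ≤ ({(E.state t).ID k} : Set (Fin m)).encard := Set.encard_mono hsub
        _ ≤ 2 := by rw [Set.encard_singleton]; exact one_le_two
  · intro hT j hj hkP
    have hFk := hF k j hj hkP
    have hple : t ≤ (E.state t).ω j + Δbar :=
      pos_le (j := j) E (hω j).1 (fun n hag hn => hG n (by rw [hag]; exact ⟨hn.1, le_of_lt hn.2⟩))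
    have hΔH := E.ΔH_pos
    rw [hT] at hFk
    linarith
  · intro j hj hkP l hlj hlid
    obtain ⟨i₀, hDj⟩ := hD j
    have hi₀ : i₀ = (E.state t).ID k := by
      rcases hDj hkP with h | h
      · exact absurd (h : (E.state t).ID k = j).symm hj
      · exact (h : (E.state t).ID k = i₀).symm
    rw [Set.eq_empty_iff_forall_notMem]
    rintro x ⟨hx1, hx2⟩
    have hx2' : (E.state t).ID x = l := hx2
    rcases hDj hx1 with h | h
    · exact hlj (hx2'.symm.trans (h : (E.state t).ID x = j))
    · rw [hi₀] at h
      exact hlid (hx2'.symm.trans (h : (E.state t).ID x = (E.state t).ID k))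
end
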